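/- Let Q : ℝ → ℝ^{m×r} and R : ℝ → ℝ^{r×r} be matrix-valued functions differentiable at t = 0, such that Q(t)ᵀQ(t) = I_r for all t in a neighborhood of 0 and R(0) is invertible. Set X(t) = Q(t)R(t), write Q₀ = Q(0), R₀ = R(0), and let V = X'(0) be the derivative of X at 0. Then the map t ↦ Q(t)Q(t)ᵀ is differentiable at 0 with derivative (I_m − Q₀Q₀ᵀ) V R₀⁻¹ Q₀ᵀ + Q₀ R₀⁻ᵀ Vᵀ (I_m − Q₀Q₀ᵀ). (This is the derivative of the orthogonal projector X̃_{≥k+1}X̃_{≥k+1}ᵀ along a curve, with Q = X̃_{≥k+1}, R = R_k, X = X_{≥k+1}, and V = V_{≥k+1}.) -/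

import Mathlib

open Matrix Filter Topology

lemma matmul_hasDerivAt {m n p : ℕ} (A : ℝ → Matrix (Fin m) (Fin n) ℝ)
    (B : ℝ → Matrix (Fin n) (Fin p) ℝ) (DA : Matrix (Fin m) (Fin n) ℝ)
    (DB : Matrix (Fin n) (Fin p) ℝ)
    (hA : ∀ i j, HasDerivAt (fun t => A t i j) (DA i j) 0)
    (hB : ∀ i j, HasDerivAt (fun t => B t i j) (DB i j) 0)
    (i : Fin m) (j : Fin p) :
    HasDerivAt (fun t => (A t * B t) i j) ((DA * B 0 + A 0 * DB) i j) 0 := by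
  have : HasDerivAt (fun t => ∑ k, A t i k * B t k j)
      (∑ k, (DA i k * B 0 k j + A 0 i k * DB k j)) 0 :=
    HasDerivAt.fun_sum fun k _ => (hA i k).mul (hB k j)
  simpa [Matrix.mul_apply, Matrix.add_apply, Finset.sum_add_distrib] using this

theorem projector_hasDerivAt (m r : ℕ)
    (Q : ℝ → Matrix (Fin m) (Fin r) ℝ) (R : ℝ → Matrix (Fin r) (Fin r) ℝ)
    (DQ : Matrix (Fin m) (Fin r) ℝ) (DR : Matrix (Fin r) (Fin r) ℝ)
    (hQ : ∀ i j, HasDerivAt (fun t => Q t i j) (DQ i j) 0)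
    (hR : ∀ i j, HasDerivAt (fun t => R t i j) (DR i j) 0)
    (horth : ∀ᶠ t in 𝓝 (0 : ℝ), (Q t)ᵀ * Q t = 1)
    (hinv : IsUnit (R 0))
    (V : Matrix (Fin m) (Fin r) ℝ)
    (hV : ∀ i j, HasDerivAt (fun t => (Q t * R t) i j) (V i j) 0) :
    ∀ (i j : Fin m),
      HasDerivAt (fun t => (Q t * (Q t)ᵀ) i j)
        ((((1 - Q 0 * (Q 0)ᵀ) * V * (R 0)⁻¹ * (Q 0)ᵀ +
            Q 0 * ((R 0)⁻¹)ᵀ * Vᵀ * (1 - Q 0 * (Q 0)ᵀ) :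
          Matrix (Fin m) (Fin m) ℝ)) i j) 0 := by
  intro i j
  have hQT : ∀ i j, HasDerivAt (fun t => (Q t)ᵀ i j) (DQᵀ i j) 0 := fun i j => hQ j i
  -- V = DQ * R 0 + Q 0 * DR
  have hVeq : V = DQ * R 0 + Q 0 * DR := by
    ext i j
    exact (hV i j).unique (matmul_hasDerivAt Q R DQ DR hQ hR i j)
  -- skew: DQᵀ * Q 0 + (Q 0)ᵀ * DQ = 0
  have hskew : DQᵀ * Q 0 + (Q 0)ᵀ * DQ = 0 := by
    ext i j
    have h1 : HasDerivAt (fun t => ((Q t)ᵀ * Q t) i j)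
        ((DQᵀ * Q 0 + (Q 0)ᵀ * DQ) i j) 0 :=
      matmul_hasDerivAt (fun t => (Q t)ᵀ) Q DQᵀ DQ hQT hQ i j
    have h2 : HasDerivAt (fun _ : ℝ => (1 : Matrix (Fin r) (Fin r) ℝ) i j)
        ((DQᵀ * Q 0 + (Q 0)ᵀ * DQ) i j) 0 := by
      apply h1.congr_of_eventuallyEq
      filter_upwards [horth] with t ht
      rw [ht]
    simpa using h2.unique (hasDerivAt_const _ _)
  have h1 : (Q 0)ᵀ * Q 0 = 1 := horth.self_of_nhds
  have hRinv : R 0 * (R 0)⁻¹ = 1 :=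
    Matrix.mul_nonsing_inv _ ((Matrix.isUnit_iff_isUnit_det _).mp hinv)
  have hderiv : HasDerivAt (fun t => (Q t * (Q t)ᵀ) i j)
      ((DQ * (Q 0)ᵀ + Q 0 * DQᵀ) i j) 0 :=
    matmul_hasDerivAt Q (fun t => (Q t)ᵀ) DQ DQᵀ hQ hQT i j
  have key : (1 - Q 0 * (Q 0)ᵀ) * V * (R 0)⁻¹ * (Q 0)ᵀ +
      Q 0 * ((R 0)⁻¹)ᵀ * Vᵀ * (1 - Q 0 * (Q 0)ᵀ) = DQ * (Q 0)ᵀ + Q 0 * DQᵀ := by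
    have hQTDQ : (Q 0)ᵀ * DQ = -(DQᵀ * Q 0) := by
      linear_combination (norm := noncomm_ring) hskew
    have hRinvT : ((R 0)⁻¹)ᵀ * (R 0)ᵀ = 1 := by
      rw [← Matrix.transpose_mul, hRinv, Matrix.transpose_one]
    have e1 : (1 - Q 0 * (Q 0)ᵀ) * Q 0 = 0 := by
      rw [Matrix.sub_mul, Matrix.one_mul, Matrix.mul_assoc, h1, Matrix.mul_one, sub_self]
    have e2 : (Q 0)ᵀ * (1 - Q 0 * (Q 0)ᵀ) = 0 := by
      rw [Matrix.mul_sub, Matrix.mul_one, ← Matrix.mul_assoc, h1, Matrix.one_mul, sub_self]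
    have t1 : (1 - Q 0 * (Q 0)ᵀ) * V * (R 0)⁻¹ * (Q 0)ᵀ =
        (1 - Q 0 * (Q 0)ᵀ) * DQ * (Q 0)ᵀ := by
      rw [hVeq, Matrix.mul_add, ← Matrix.mul_assoc _ (Q 0) DR, e1, Matrix.zero_mul,
        add_zero, ← Matrix.mul_assoc, Matrix.mul_assoc _ (R 0) _, hRinv, Matrix.mul_one]
    have t2 : Q 0 * ((R 0)⁻¹)ᵀ * Vᵀ * (1 - Q 0 * (Q 0)ᵀ) =
        Q 0 * DQᵀ * (1 - Q 0 * (Q 0)ᵀ) := by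
      rw [hVeq, Matrix.transpose_add, Matrix.transpose_mul, Matrix.transpose_mul]
      simp only [Matrix.mul_add, Matrix.add_mul, Matrix.mul_assoc, e2,
        Matrix.mul_zero, add_zero]
      rw [← Matrix.mul_assoc ((R 0)⁻¹)ᵀ, hRinvT, Matrix.one_mul]
    rw [t1, t2, Matrix.sub_mul, Matrix.sub_mul, Matrix.one_mul, Matrix.mul_sub,
      Matrix.mul_one, Matrix.mul_assoc (Q 0) (Q 0)ᵀ DQ, hQTDQ]
    simp only [Matrix.mul_neg, Matrix.neg_mul, Matrix.mul_assoc]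
    abel
  rw [key]
  exact hderiv
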